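/- arXiv:1507.05261 — 5 statements merged into one kernel-verified Lean document; each statement's English description precedes it below -/
import Mathlib

section
/- For 0 < a < b, the integral ∫_a^b dx / (x√((b-x)(x-a))) equals π/√(ab). -/
open Real Set MeasureTheory intervalIntegral

theorem integral_inv_x_div_sqrt (a b : ℝ) (ha : 0 < a) (hab : a < b) :
    ∫ x in a..b, 1 / (x * Real.sqrt ((b - x) * (x - a))) = Real.pi / Real.sqrt (a * b) := by
  have hb : 0 < b := ha.trans hab
  have hba : 0 < b - a := sub_pos.2 hab
  have hcpos : 0 < Real.sqrt (a * b) := Real.sqrt_pos.2 (mul_pos ha hb)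
  set c : ℝ := Real.sqrt (a * b) with hcdef
  have hcsq : c ^ 2 = a * b := Real.sq_sqrt (mul_pos ha hb).le
  set f : ℝ → ℝ := fun x => 1 / (x * Real.sqrt ((b - x) * (x - a))) with hfdef
  set u : ℝ → ℝ := fun x => ((a + b) * x - 2 * (a * b)) / ((b - a) * x) with hudef
  set F : ℝ → ℝ := fun x => (1 / c) * Real.arcsin (u x) with hFdef
  -- continuity of F on [a, b]
  have hFcont : ContinuousOn F (Icc a b) := by
    apply ContinuousOn.mul continuousOn_const
    apply Real.continuous_arcsin.comp_continuousOn
    apply ContinuousOn.div (by fun_prop) (by fun_prop)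
    intro x hx
    have hx0 : 0 < x := lt_of_lt_of_le ha hx.1
    positivity
  -- derivative of F on (a, b)
  have hFderiv : ∀ x ∈ Ioo a b, HasDerivAt F (f x) x := by
    intro x hx
    have hx0 : 0 < x := ha.trans hx.1
    have hd : (b - a) * x ≠ 0 := by positivity
    have ht : 0 < (b - x) * (x - a) := mul_pos (sub_pos.2 hx.2) (sub_pos.2 hx.1)
    have hs : 0 < Real.sqrt ((b - x) * (x - a)) := Real.sqrt_pos.2 ht
    set s : ℝ := Real.sqrt ((b - x) * (x - a)) with hsdef
    have hssq : s ^ 2 = (b - x) * (x - a) := Real.sq_sqrt ht.le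
    -- u has a derivative at x
    have hnum : HasDerivAt (fun y => (a + b) * y - 2 * (a * b)) (a + b) x := by
      simpa using ((hasDerivAt_id x).const_mul (a + b)).sub_const (2 * (a * b))
    have hden : HasDerivAt (fun y => (b - a) * y) (b - a) x := by
      simpa using (hasDerivAt_id x).const_mul (b - a)
    have hu' : HasDerivAt u
        (((a + b) * ((b - a) * x) - ((a + b) * x - 2 * (a * b)) * (b - a)) / ((b - a) * x) ^ 2)
        x := hnum.div hden hd
    -- u x ≠ ±1
    have hune1 : u x ≠ 1 := by
      intro h
      rw [hudef] at h
      simp only [div_eq_one_iff_eq hd] at h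
      nlinarith [mul_pos ha (sub_pos.2 hx.2)]
    have hunem1 : u x ≠ -1 := by
      intro h
      rw [hudef] at h
      rw [div_eq_iff hd] at h
      nlinarith [mul_pos hb (sub_pos.2 hx.1)]
    -- the square root of 1 - u x ^ 2
    have h1u : 1 - u x ^ 2 = (2 * c * s / ((b - a) * x)) ^ 2 := by
      rw [hudef]
      field_simp
      nlinarith [hcsq, hssq]
    have hsqrt : Real.sqrt (1 - u x ^ 2) = 2 * c * s / ((b - a) * x) := by
      rw [h1u, Real.sqrt_sq (by positivity)]
    have harcsin := (Real.hasDerivAt_arcsin hunem1 hune1).comp x hu'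
    have hF' := harcsin.const_mul (1 / c)
    refine HasDerivAt.congr_deriv hF' (Eq.symm ?_)
    rw [hsqrt, hfdef]
    have hN : (a + b) * ((b - a) * x) - ((a + b) * x - 2 * (a * b)) * (b - a)
        = 2 * (a * b) * (b - a) := by ring
    rw [hN]
    have hkey : 1 / c * (1 / (2 * c * s / ((b - a) * x)) * (2 * (a * b) * (b - a) / ((b - a) * x) ^ 2))
        = (a * b) / (c ^ 2 * (x * s)) := by
      rw [div_div_eq_mul_div]
      field_simp
    rw [hkey, hcsq]
    rw [eq_div_iff (by positivity)]
    field_simp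
    exact hsdef
  -- interval integrability of f
  have hmeas : ∀ (S : Set ℝ), AEStronglyMeasurable f (volume.restrict S) := by
    intro S
    apply Measurable.aestronglyMeasurable
    apply Measurable.div measurable_const
    fun_prop
  set m : ℝ := (a + b) / 2 with hmdef
  have ham : a < m := by rw [hmdef]; linarith
  have hmb : m < b := by rw [hmdef]; linarith
  have hint1 : IntervalIntegrable f volume a m := by
    set K : ℝ := 1 / (a * Real.sqrt ((b - a) / 2)) with hK
    have hKpos : 0 < K := by rw [hK]; positivity
    have hg : IntervalIntegrable (fun x => K * (x - a) ^ (-(1/2) : ℝ)) volume a m := by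
      have h0 : IntervalIntegrable (fun x : ℝ => x ^ (-(1/2) : ℝ)) volume 0 (m - a) :=
        intervalIntegrable_rpow' (by norm_num)
      have h1 := (h0.comp_sub_right a).const_mul K
      simpa using h1
    apply hg.mono_fun' (hmeas _)
    rw [Filter.EventuallyLE, ae_restrict_iff' measurableSet_uIoc]
    apply Filter.Eventually.of_forall
    intro x hx
    rw [uIoc_of_le ham.le] at hx
    have hxa : a < x := hx.1
    have hx0 : 0 < x := ha.trans hxa
    have hbx : (b - a) / 2 ≤ b - x := by
      have : x ≤ m := hx.2
      rw [hmdef] at this; linarith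
    have hxa' : 0 < x - a := sub_pos.2 hxa
    have hsle : Real.sqrt ((b - a) / 2) * Real.sqrt (x - a) ≤
        Real.sqrt ((b - x) * (x - a)) := by
      rw [← Real.sqrt_mul (by positivity)]
      apply Real.sqrt_le_sqrt
      nlinarith
    have hrpow : (x - a) ^ (-(1/2) : ℝ) = 1 / Real.sqrt (x - a) := by
      rw [Real.rpow_neg hxa'.le, Real.sqrt_eq_rpow]
      exact (one_div _).symm
    have hden1 : 0 < a * Real.sqrt ((b - a) / 2) * Real.sqrt (x - a) := by positivity
    have hfx : f x = 1 / (x * Real.sqrt ((b - x) * (x - a))) := rfl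
    rw [hfx, hrpow, hK]
    have hfpos : 0 < x * Real.sqrt ((b - x) * (x - a)) := by
      apply mul_pos hx0
      apply Real.sqrt_pos.2
      nlinarith
    rw [Real.norm_eq_abs, abs_of_pos (by positivity)]
    rw [div_mul_div_comm, one_mul]
    apply one_div_le_one_div_of_le hden1
    rw [mul_assoc]
    exact mul_le_mul hxa.le hsle (by positivity) hx0.le
  have hint2 : IntervalIntegrable f volume m b := by
    set K : ℝ := 1 / (a * Real.sqrt ((b - a) / 2)) with hK
    have hg : IntervalIntegrable (fun x => K * (b - x) ^ (-(1/2) : ℝ)) volume m b := by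
      have h1 := ((intervalIntegrable_rpow' (r := -(1/2)) (a := b - m) (b := b - b)
        (by norm_num)).comp_sub_left b).const_mul K
      simpa using h1
    apply hg.mono_fun' (hmeas _)
    rw [Filter.EventuallyLE, ae_restrict_iff' measurableSet_uIoc]
    apply Filter.Eventually.of_forall
    intro x hx
    rw [uIoc_of_le hmb.le] at hx
    have hxb : x ≤ b := hx.2
    have hmx : m < x := hx.1
    have hxa : a < x := ham.trans hmx
    have hx0 : 0 < x := ha.trans hxa
    have hxa2 : (b - a) / 2 ≤ x - a := by rw [hmdef] at hmx; linarith
    -- here b - x could be 0 (x = b); handle via cases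
    rcases eq_or_lt_of_le hxb with heq | hxb'
    · subst heq
      have h1 : f x = 0 := by rw [hfdef]; simp
      have h2 : (x - x : ℝ) ^ (-(1/2) : ℝ) = 0 := by
        rw [sub_self, Real.zero_rpow (by norm_num)]
      rw [h1, h2, norm_zero, mul_zero]
    have hbx : 0 < b - x := sub_pos.2 hxb'
    have hsle : Real.sqrt ((b - a) / 2) * Real.sqrt (b - x) ≤
        Real.sqrt ((b - x) * (x - a)) := by
      rw [← Real.sqrt_mul (by positivity)]
      apply Real.sqrt_le_sqrt
      nlinarith
    have hrpow : (b - x) ^ (-(1/2) : ℝ) = 1 / Real.sqrt (b - x) := by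
      rw [Real.rpow_neg hbx.le, Real.sqrt_eq_rpow]
      exact (one_div _).symm
    have hden1 : 0 < a * Real.sqrt ((b - a) / 2) * Real.sqrt (b - x) := by positivity
    have hfx : f x = 1 / (x * Real.sqrt ((b - x) * (x - a))) := rfl
    rw [hfx, hrpow, hK]
    have hfpos : 0 < x * Real.sqrt ((b - x) * (x - a)) := by
      apply mul_pos hx0
      apply Real.sqrt_pos.2
      nlinarith
    rw [Real.norm_eq_abs, abs_of_pos (by positivity)]
    rw [div_mul_div_comm, one_mul]
    apply one_div_le_one_div_of_le hden1
    rw [mul_assoc]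
    exact mul_le_mul hxa.le hsle (by positivity) hx0.le
  have hint : IntervalIntegrable f volume a b := hint1.trans hint2
  -- apply FTC
  have hderiv' : ∀ x ∈ Ioo a b, HasDerivWithinAt F (f x) (Ioi x) x := fun x hx =>
    (hFderiv x hx).hasDerivWithinAt
  have := intervalIntegral.integral_eq_sub_of_hasDeriv_right_of_le hab.le hFcont hderiv' hint
  rw [hfdef] at this
  rw [this, hFdef, hudef]
  have hub : ((a + b) * b - 2 * (a * b)) / ((b - a) * b) = 1 := by
    rw [div_eq_one_iff_eq (by positivity)]; ring
  have hua : ((a + b) * a - 2 * (a * b)) / ((b - a) * a) = -1 := by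
    rw [div_eq_iff (by positivity)]; ring
  simp only [hub, hua, Real.arcsin_one, Real.arcsin_neg_one]
  field_simp
  ring
end

section
/- For 0 < a < b, the integral ∫_a^b dx / (x²√((b-x)(x-a))) equals (a+b)π / (2(ab)^{3/2}). -/
open Real MeasureTheory intervalIntegral Set

set_option maxHeartbeats 4000000 in
theorem integral_inv_xsq_div_sqrt (a b : ℝ) (ha : 0 < a) (hab : a < b) :
    ∫ x in a..b, 1 / (x ^ 2 * Real.sqrt ((b - x) * (x - a)))
      = (a + b) * Real.pi / (2 * (a * b) ^ ((3 : ℝ) / 2)) := by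
  have hb : 0 < b := ha.trans hab
  have hba : 0 < b - a := by linarith
  have hab0 : 0 < a * b := mul_pos ha hb
  set f : ℝ → ℝ := fun x => 1 / (x ^ 2 * Real.sqrt ((b - x) * (x - a))) with hf
  set F : ℝ → ℝ := fun x =>
    (a + b) / (2 * (a * b) * Real.sqrt (a * b)) *
      Real.arcsin (((a + b) * x - 2 * (a * b)) / ((b - a) * x)) +
      Real.sqrt ((b - x) * (x - a)) / (a * b * x) with hF
  -- measurability of f
  have hfm : Measurable f := by
    apply Measurable.div measurable_const
    exact ((measurable_id.pow_const 2).mul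
      ((Real.continuous_sqrt.measurable).comp
        (((measurable_const.sub measurable_id)).mul (measurable_id.sub measurable_const))))
  -- integrability
  have key_int : ∀ c C : ℝ, 0 < C →
      (∀ x ∈ Set.uIoc a b, ‖f x‖ ≤ ‖C * c‖) → True := fun _ _ _ _ => trivial
  set m : ℝ := (a + b) / 2 with hm
  have ham : a < m := by simp only [hm]; linarith
  have hmb : m < b := by simp only [hm]; linarith
  have hbm : b - m = (b - a) / 2 := by simp only [hm]; ring
  set C : ℝ := 1 / (a ^ 2 * Real.sqrt ((b - a) / 2)) with hC
  have hCpos : 0 < C := by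
    apply one_div_pos.mpr
    exact mul_pos (pow_pos ha 2) (Real.sqrt_pos.mpr (by linarith))
  have hint : IntervalIntegrable f volume a b := by
    have h1 : IntervalIntegrable f volume a m := by
      have hg : IntervalIntegrable (fun x => C * (x - a) ^ (-(1:ℝ)/2)) volume a m := by
        have := ((intervalIntegrable_rpow' (r := -(1:ℝ)/2) (by norm_num)
          (a := 0) (b := m - a)).comp_sub_right a).const_mul C
        simpa using this
      apply hg.mono_fun ((hfm.aestronglyMeasurable).restrict)
      rw [Filter.EventuallyLE, ae_restrict_iff' measurableSet_uIoc]
      filter_upwards with x hx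
      rw [Set.uIoc_of_le ham.le] at hx
      obtain ⟨hx1, hx2⟩ := hx
      have hx0 : 0 < x := ha.trans hx1
      have hxa : 0 < x - a := by linarith
      have hbx : (b - a) / 2 ≤ b - x := by simp only [hm] at hx2; linarith
      have hbx0 : 0 < b - x := lt_of_lt_of_le (by linarith) hbx
      have hsq : Real.sqrt ((b - x) * (x - a)) = Real.sqrt (b - x) * Real.sqrt (x - a) :=
        Real.sqrt_mul hbx0.le _
      have hrw : (x - a) ^ (-(1:ℝ)/2) = (Real.sqrt (x - a))⁻¹ := by
        rw [Real.sqrt_eq_rpow, ← Real.rpow_neg hxa.le]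
        norm_num
      have hfx : 0 ≤ f x := by
        apply div_nonneg zero_le_one
        positivity
      have hgx : (0:ℝ) ≤ C * (x - a) ^ (-(1:ℝ)/2) := by positivity
      rw [Real.norm_eq_abs, Real.norm_eq_abs, abs_of_nonneg hfx, abs_of_nonneg hgx,
        hf, hC, hrw]
      simp only
      rw [hsq]
      have h1 : a ^ 2 ≤ x ^ 2 := by nlinarith
      have h2 : Real.sqrt ((b - a) / 2) ≤ Real.sqrt (b - x) := Real.sqrt_le_sqrt hbx
      have hmono : a ^ 2 * Real.sqrt ((b - a) / 2) * Real.sqrt (x - a)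
          ≤ x ^ 2 * (Real.sqrt (b - x) * Real.sqrt (x - a)) := by
        have h3 := mul_le_mul (mul_le_mul h1 h2 (Real.sqrt_nonneg _) (by positivity))
          (le_refl (Real.sqrt (x - a))) (Real.sqrt_nonneg _) (by positivity)
        calc a ^ 2 * Real.sqrt ((b - a) / 2) * Real.sqrt (x - a)
            ≤ x ^ 2 * Real.sqrt (b - x) * Real.sqrt (x - a) := h3
          _ = x ^ 2 * (Real.sqrt (b - x) * Real.sqrt (x - a)) := by ring
      calc 1 / (x ^ 2 * (Real.sqrt (b - x) * Real.sqrt (x - a)))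
          ≤ 1 / (a ^ 2 * Real.sqrt ((b - a) / 2) * Real.sqrt (x - a)) :=
            one_div_le_one_div_of_le (by positivity) hmono
        _ = 1 / (a ^ 2 * Real.sqrt ((b - a) / 2)) * (Real.sqrt (x - a))⁻¹ := by
            rw [one_div, one_div, ← mul_inv]
    have h2 : IntervalIntegrable f volume m b := by
      have hg : IntervalIntegrable (fun x => C * (b - x) ^ (-(1:ℝ)/2)) volume m b := by
        have := (((intervalIntegrable_rpow' (r := -(1:ℝ)/2) (by norm_num)
          (a := 0) (b := b - m)).comp_sub_left b).const_mul C).symm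
        simpa using this
      apply hg.mono_fun ((hfm.aestronglyMeasurable).restrict)
      rw [Filter.EventuallyLE, ae_restrict_iff' measurableSet_uIoc]
      filter_upwards with x hx
      rw [Set.uIoc_of_le hmb.le] at hx
      obtain ⟨hx1, hx2⟩ := hx
      have hxa : (b - a) / 2 ≤ x - a := by simp only [hm] at hx1; linarith
      have hxa0 : 0 < x - a := lt_of_lt_of_le (by linarith) hxa
      have hx0 : 0 < x := by linarith
      have hbx : 0 ≤ b - x := by linarith
      have hsq : Real.sqrt ((b - x) * (x - a)) = Real.sqrt (b - x) * Real.sqrt (x - a) :=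
        Real.sqrt_mul hbx _
      have hrw : (b - x) ^ (-(1:ℝ)/2) = (Real.sqrt (b - x))⁻¹ := by
        rw [Real.sqrt_eq_rpow, ← Real.rpow_neg hbx]
        norm_num
      have hfx : 0 ≤ f x := by
        apply div_nonneg zero_le_one
        positivity
      have hgx : (0:ℝ) ≤ C * (b - x) ^ (-(1:ℝ)/2) := by positivity
      rw [Real.norm_eq_abs, Real.norm_eq_abs, abs_of_nonneg hfx, abs_of_nonneg hgx,
        hf, hC, hrw]
      simp only
      rcases eq_or_lt_of_le hbx with h | hbx0
      · rw [← h]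
        simp only [Real.sqrt_zero, zero_mul, mul_zero, div_zero, inv_zero]
        positivity
      rw [hsq]
      have h1 : a ^ 2 ≤ x ^ 2 := by nlinarith
      have h2 : Real.sqrt ((b - a) / 2) ≤ Real.sqrt (x - a) := Real.sqrt_le_sqrt hxa
      have hmono : a ^ 2 * Real.sqrt ((b - a) / 2) * Real.sqrt (b - x)
          ≤ x ^ 2 * (Real.sqrt (b - x) * Real.sqrt (x - a)) := by
        have h3 := mul_le_mul (mul_le_mul h1 h2 (Real.sqrt_nonneg _) (by positivity))
          (le_refl (Real.sqrt (b - x))) (Real.sqrt_nonneg _) (by positivity)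
        calc a ^ 2 * Real.sqrt ((b - a) / 2) * Real.sqrt (b - x)
            ≤ x ^ 2 * Real.sqrt (x - a) * Real.sqrt (b - x) := h3
          _ = x ^ 2 * (Real.sqrt (b - x) * Real.sqrt (x - a)) := by ring
      calc 1 / (x ^ 2 * (Real.sqrt (b - x) * Real.sqrt (x - a)))
          ≤ 1 / (a ^ 2 * Real.sqrt ((b - a) / 2) * Real.sqrt (b - x)) :=
            one_div_le_one_div_of_le (by positivity) hmono
        _ = 1 / (a ^ 2 * Real.sqrt ((b - a) / 2)) * (Real.sqrt (b - x))⁻¹ := by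
            rw [one_div, one_div, ← mul_inv]
    exact h1.trans h2
  -- continuity of F on [a, b]
  have hcont : ContinuousOn F (Set.Icc a b) := by
    apply ContinuousOn.add
    · apply ContinuousOn.mul continuousOn_const
      apply Real.continuous_arcsin.comp_continuousOn
      apply ContinuousOn.div
      · exact (continuousOn_const.mul continuousOn_id).sub continuousOn_const
      · exact continuousOn_const.mul continuousOn_id
      · intro x hx
        have : 0 < x := lt_of_lt_of_le ha hx.1
        positivity
    · apply ContinuousOn.div
      · apply Real.continuous_sqrt.comp_continuousOn
        exact (continuousOn_const.sub continuousOn_id).mul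
          (continuousOn_id.sub continuousOn_const)
      · exact continuousOn_const.mul continuousOn_id
      · intro x hx
        have : 0 < x := lt_of_lt_of_le ha hx.1
        positivity
  -- derivative
  have hderiv : ∀ x ∈ Set.Ioo a b, HasDerivAt F (f x) x := by
    intro x hx
    obtain ⟨hxa, hxb⟩ := hx
    have hx0 : 0 < x := ha.trans hxa
    have hQ : 0 < (b - x) * (x - a) := mul_pos (by linarith) (by linarith)
    set s : ℝ := Real.sqrt ((b - x) * (x - a)) with hs
    set t : ℝ := Real.sqrt (a * b) with ht
    have hs0 : 0 < s := Real.sqrt_pos.mpr hQ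
    have ht0 : 0 < t := Real.sqrt_pos.mpr hab0
    have hs2 : s ^ 2 = (b - x) * (x - a) := Real.sq_sqrt hQ.le
    have ht2 : t ^ 2 = a * b := Real.sq_sqrt hab0.le
    set u : ℝ := ((a + b) * x - 2 * (a * b)) / ((b - a) * x) with hu
    have hden : (b - a) * x ≠ 0 := by positivity
    have hu1 : -1 < u := by
      rw [hu, lt_div_iff₀ (by positivity)]
      nlinarith
    have hu2 : u < 1 := by
      rw [hu, div_lt_one (by positivity)]
      nlinarith
    have h1u : 0 < 1 - u ^ 2 := by nlinarith
    have hts : t * t = a * b := Real.mul_self_sqrt hab0.le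
    have hss : s * s = (b - x) * (x - a) := Real.mul_self_sqrt hQ.le
    have hsqrt1u : Real.sqrt (1 - u ^ 2) = 2 * t * s / ((b - a) * x) := by
      have h4 : (2 * t * s) ^ 2 = 4 * (a * b) * ((b - x) * (x - a)) := by
        have : (2 * t * s) ^ 2 = 4 * (t * t) * (s * s) := by ring
        rw [this, hts, hss]
      have heq : 1 - u ^ 2 = (2 * t * s / ((b - a) * x)) ^ 2 := by
        rw [hu, div_pow, div_pow, h4]
        field_simp
        ring
      rw [heq, Real.sqrt_sq (by positivity)]
    -- derivative of u
    have hdu : HasDerivAt (fun x : ℝ => ((a + b) * x - 2 * (a * b)) / ((b - a) * x))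
        (2 * (a * b) / ((b - a) * x ^ 2)) x := by
      have h1 : HasDerivAt (fun x : ℝ => (a + b) * x - 2 * (a * b)) (a + b) x := by
        simpa using ((hasDerivAt_id x).const_mul (a + b)).sub_const (2 * (a * b))
      have h2 : HasDerivAt (fun x : ℝ => (b - a) * x) (b - a) x := by
        simpa using (hasDerivAt_id x).const_mul (b - a)
      have := h1.div h2 hden
      refine this.congr_deriv ?_
      field_simp
      ring
    have hne1 : ((a + b) * x - 2 * (a * b)) / ((b - a) * x) ≠ -1 := by
      rw [← hu]; exact ne_of_gt hu1
    have hne2 : ((a + b) * x - 2 * (a * b)) / ((b - a) * x) ≠ 1 := by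
      rw [← hu]; exact ne_of_lt hu2
    have harc : HasDerivAt (fun x : ℝ =>
        Real.arcsin (((a + b) * x - 2 * (a * b)) / ((b - a) * x)))
        (t / (s * x)) x := by
      have h := (Real.hasDerivAt_arcsin hne1 hne2).comp x hdu
      have e1 : 1 / Real.sqrt
            (1 - (((a + b) * x - 2 * (a * b)) / ((b - a) * x)) ^ 2) *
            (2 * (a * b) / ((b - a) * x ^ 2)) = t / (s * x) := by
        rw [← hu, hsqrt1u, one_div_div, ← hts]
        field_simp
      rw [e1] at h
      exact h
    -- derivative of the algebraic term
    have hQ' : HasDerivAt (fun x : ℝ => (b - x) * (x - a)) ((a + b) - 2 * x) x := by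
      have h1 : HasDerivAt (fun x : ℝ => b - x) (-1) x := by
        simpa using (hasDerivAt_id x).const_sub b
      have h2 : HasDerivAt (fun x : ℝ => x - a) 1 x := by
        simpa using (hasDerivAt_id x).sub_const a
      have := h1.mul h2
      refine this.congr_deriv ?_
      ring
    have hsqrtQ : HasDerivAt (fun x : ℝ => Real.sqrt ((b - x) * (x - a)))
        (1 / (2 * s) * ((a + b) - 2 * x)) x :=
      (Real.hasDerivAt_sqrt hQ.ne').comp x hQ'
    have hdenom : HasDerivAt (fun x : ℝ => a * b * x) (a * b) x := by
      simpa using (hasDerivAt_id x).const_mul (a * b)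
    have habx : a * b * x ≠ 0 := by positivity
    have hterm2 : HasDerivAt (fun x : ℝ => Real.sqrt ((b - x) * (x - a)) / (a * b * x))
        ((2 * (a * b) - (a + b) * x) / (2 * (a * b) * s * x ^ 2)) x := by
      have h := hsqrtQ.div hdenom habx
      rw [show Real.sqrt ((b - x) * (x - a)) = s from rfl] at h
      have key : 1 / (2 * s) * ((a + b) - 2 * x) * (a * b * x) - s * (a * b)
          = a * b * (2 * (a * b) - (a + b) * x) / (2 * s) := by
        have h5 : 1 / (2 * s) * ((a + b) - 2 * x) * (a * b * x) - s * (a * b)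
            = (((a + b) - 2 * x) * (a * b * x) - 2 * (s * s) * (a * b)) / (2 * s) := by
          field_simp
        rw [h5, hss]
        congr 1
        ring
      rw [key] at h
      have e3 : a * b * (2 * (a * b) - (a + b) * x) / (2 * s) / (a * b * x) ^ 2
          = (2 * (a * b) - (a + b) * x) / (2 * (a * b) * s * x ^ 2) := by
        rw [div_div, div_eq_div_iff (by positivity) (by positivity)]
        ring
      rw [e3] at h
      exact h
    have htotal := (harc.const_mul ((a + b) / (2 * (a * b) * t))).add hterm2
    have hsum : (a + b) / (2 * (a * b) * t) * (t / (s * x))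
        + (2 * (a * b) - (a + b) * x) / (2 * (a * b) * s * x ^ 2) = f x := by
      rw [hf]
      simp only
      rw [show Real.sqrt ((b - x) * (x - a)) = s from rfl]
      field_simp
      ring
    rw [← hsum]
    exact htotal
  -- apply FTC
  rw [intervalIntegral.integral_eq_sub_of_hasDeriv_right_of_le hab.le hcont
    (fun x hx => (hderiv x hx).hasDerivWithinAt) hint]
  -- evaluate F b - F a
  have hFb : F b = (a + b) / (2 * (a * b) * Real.sqrt (a * b)) * (Real.pi / 2) := by
    rw [hF]
    simp only
    have h1 : ((a + b) * b - 2 * (a * b)) / ((b - a) * b) = 1 := by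
      rw [div_eq_one_iff_eq (by positivity)]
      ring
    rw [h1, Real.arcsin_one]
    simp
  have hFa : F a = (a + b) / (2 * (a * b) * Real.sqrt (a * b)) * (-(Real.pi / 2)) := by
    rw [hF]
    simp only
    have h1 : ((a + b) * a - 2 * (a * b)) / ((b - a) * a) = -1 := by
      rw [div_eq_iff (by positivity)]
      ring
    rw [h1, Real.arcsin_neg_one]
    simp
  rw [hFb, hFa]
  have hrpow : (a * b) ^ ((3:ℝ)/2) = (a * b) * Real.sqrt (a * b) := by
    rw [show (3:ℝ)/2 = 1 + 1/2 by norm_num, Real.rpow_add hab0, Real.rpow_one,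
      ← Real.sqrt_eq_rpow]
  rw [hrpow]
  have hsab : Real.sqrt (a * b) ≠ 0 := (Real.sqrt_pos.mpr hab0).ne'
  field_simp
  ring
end

section
/- For 0 < a < b, the integral ∫_a^b ln(x) dx / √((b-x)(x-a)) equals 2π ln((√a+√b)/2). -/
open Real MeasureTheory intervalIntegral

lemma quad_pos {r : ℝ} (hr0 : 0 ≤ r) (hr1 : r < 1) (u : ℝ) :
    0 < 1 - 2*r*Real.cos u + r^2 := by
  nlinarith [Real.cos_le_one u, Real.neg_one_le_cos u, sq_nonneg (1 - r)]

lemma hasSum_log_quad {r : ℝ} (hr0 : 0 ≤ r) (hr1 : r < 1) (u : ℝ) :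
    HasSum (fun n : ℕ => r^n * Real.cos (n*u) / n)
      (-(1/2) * Real.log (1 - 2*r*Real.cos u + r^2)) := by
  set z : ℂ := (r : ℂ) * Complex.exp (u * Complex.I) with hz
  have hznorm : ‖z‖ = r := by
    rw [hz, norm_mul, Complex.norm_real, Complex.norm_exp_ofReal_mul_I,
      mul_one, Real.norm_eq_abs, abs_of_nonneg hr0]
  have h := Complex.hasSum_taylorSeries_neg_log (z := z) (by rw [hznorm]; exact hr1)
  have h2 := Complex.hasSum_re h
  have hterm : ∀ n : ℕ, ((z ^ n / n : ℂ)).re = r^n * Real.cos (n*u) / n := by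
    intro n
    have e1 : z ^ n / n = ((r^n / n : ℝ) : ℂ) * Complex.exp ((n*u : ℝ) * Complex.I) := by
      rw [hz, mul_pow, ← Complex.exp_nat_mul]
      push_cast
      ring
    rw [e1, Complex.re_ofReal_mul, Complex.exp_ofReal_mul_I_re]
    ring
  have hsumval : (-Complex.log (1 - z)).re = -(1/2) * Real.log (1 - 2*r*Real.cos u + r^2) := by
    have hns : Complex.normSq (1 - z) = 1 - 2*r*Real.cos u + r^2 := by
      simp [hz, Complex.normSq_apply, Complex.exp_mul_I, Complex.mul_re, Complex.mul_im,
        Complex.cos_ofReal_re, Complex.sin_ofReal_re, Complex.cos_ofReal_im, Complex.sin_ofReal_im]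
      nlinarith [Real.sin_sq_add_cos_sq u]
    rw [Complex.neg_re, Complex.log_re, Complex.norm_def, ← hns,
      Real.log_sqrt (Complex.normSq_nonneg _)]
    rw [hns]
    ring
  rw [← hsumval]
  exact h2.congr_fun fun n => (hterm n).symm

lemma integral_log_quad {r : ℝ} (hr0 : 0 ≤ r) (hr1 : r < 1) :
    ∫ u in Set.Ioc (0:ℝ) π, Real.log (1 - 2*r*Real.cos u + r^2) = 0 := by
  set F : ℕ → ℝ → ℝ := fun n u => r^n * Real.cos (n*u) / n with hF
  have hcont : ∀ n : ℕ, Continuous (F n) := by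
    intro n
    exact (continuous_const.mul (Real.continuous_cos.comp
      (continuous_const.mul continuous_id))).div_const _
  have hInt : ∀ n : ℕ, Integrable (F n) (volume.restrict (Set.Ioc (0:ℝ) π)) := fun n =>
    (hcont n).integrableOn_Ioc
  have hbd : ∀ n : ℕ, ∀ u : ℝ, ‖F n u‖ ≤ r^n := by
    intro n u
    rcases Nat.eq_zero_or_pos n with rfl | hn
    · simp [hF]
    · rw [hF]
      simp only [norm_div, norm_mul, Real.norm_eq_abs]
      rw [abs_of_nonneg (pow_nonneg hr0 n)]
      have h1 : |Real.cos (n*u)| ≤ 1 := Real.abs_cos_le_one _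
      have h2 : (1:ℝ) ≤ |(n:ℝ)| := by
        rw [abs_of_nonneg (Nat.cast_nonneg n)]; exact_mod_cast hn
      calc r^n * |Real.cos (n*u)| / |(n:ℝ)| ≤ r^n * 1 / 1 := by
            apply div_le_div₀ (by positivity) (by nlinarith [pow_nonneg hr0 n]) one_pos h2
        _ = r^n := by ring
  have hnormint : ∀ n : ℕ, ∫ u in Set.Ioc (0:ℝ) π, ‖F n u‖ ≤ π * r^n := by
    intro n
    calc ∫ u in Set.Ioc (0:ℝ) π, ‖F n u‖ ≤ ∫ _u in Set.Ioc (0:ℝ) π, r^n := by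
          apply setIntegral_mono_on (hInt n).norm ((integrableOn_const_iff).mpr (Or.inr (by
            rw [Real.volume_Ioc]; exact ENNReal.ofReal_lt_top))) measurableSet_Ioc
          intro u _; exact hbd n u
      _ = π * r^n := by
          rw [setIntegral_const, measureReal_def, Real.volume_Ioc, sub_zero, ENNReal.toReal_ofReal Real.pi_pos.le]
          simp [smul_eq_mul]
  have hsum : Summable (fun n => ∫ u in Set.Ioc (0:ℝ) π, ‖F n u‖) := by
    apply Summable.of_nonneg_of_le (fun n => integral_nonneg (fun u => norm_nonneg _)) hnormint
    exact (summable_geometric_of_lt_one hr0 hr1).mul_left π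
  have key := integral_tsum_of_summable_integral_norm hInt hsum
  have hzero : ∀ n : ℕ, ∫ u in Set.Ioc (0:ℝ) π, F n u = 0 := by
    intro n
    rcases Nat.eq_zero_or_pos n with rfl | hn
    · simp [hF]
    have hne : (n:ℝ) ≠ 0 := Nat.cast_ne_zero.mpr hn.ne'
    rw [← intervalIntegral.integral_of_le Real.pi_pos.le]
    have : ∀ u : ℝ, F n u = (r^n / n) * Real.cos (n*u) := by intro u; rw [hF]; ring
    simp_rw [this]
    rw [intervalIntegral.integral_const_mul]
    have : ∫ u in (0:ℝ)..π, Real.cos (n*u) = (n:ℝ)⁻¹ • ∫ u in (n*(0:ℝ))..(n*π), Real.cos u := by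
      exact intervalIntegral.integral_comp_mul_left Real.cos hne
    rw [this, mul_zero, integral_cos, Real.sin_zero, Real.sin_nat_mul_pi]
    simp
  rw [funext hzero, tsum_zero] at key
  have htsum : ∀ u : ℝ, ∑' n, F n u = -(1/2) * Real.log (1 - 2*r*Real.cos u + r^2) :=
    fun u => (hasSum_log_quad hr0 hr1 u).tsum_eq
  rw [funext htsum, MeasureTheory.integral_const_mul] at key
  have := key.symm
  nlinarith [this]

lemma integral_log_p_sub_q_cos {p q : ℝ} (hq : 0 < q) (hpq : q < p) :
    ∫ u in Set.Ioc (0:ℝ) π, Real.log (p - q*Real.cos u)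
      = π * Real.log ((p + Real.sqrt (p^2 - q^2))/2) := by
  set s := Real.sqrt (p^2 - q^2) with hsdef
  have hp : 0 < p := hq.trans hpq
  have hs0 : 0 ≤ s := Real.sqrt_nonneg _
  have hs2 : s^2 = p^2 - q^2 := Real.sq_sqrt (by nlinarith)
  have hps : 0 < p + s := by linarith
  set c := (p + s)/2 with hcdef
  set r := q/(p + s) with hrdef
  have hc0 : 0 < c := by positivity
  have hr0 : 0 < r := by positivity
  have hr1 : r < 1 := by rw [hrdef, div_lt_one hps]; linarith
  have hc2 : 2*c*r = q := by rw [hcdef, hrdef]; field_simp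
  have hc1 : c*(1+r^2) = p := by
    rw [hcdef, hrdef]; field_simp; nlinarith [hs2]
  clear_value s c r
  have hpt : ∀ u : ℝ, p - q*Real.cos u = c * (1 - 2*r*Real.cos u + r^2) := by
    intro u; linear_combination Real.cos u * hc2 - hc1
  have hsplit : (fun u => Real.log (p - q*Real.cos u))
      = fun u => Real.log c + Real.log (1 - 2*r*Real.cos u + r^2) := by
    funext u
    rw [hpt u, Real.log_mul hc0.ne' (quad_pos hr0.le hr1 u).ne']
  rw [hsplit]
  have hIntq : Integrable (fun u => Real.log (1 - 2*r*Real.cos u + r^2))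
      (volume.restrict (Set.Ioc (0:ℝ) π)) := by
    apply Continuous.integrableOn_Ioc
    apply Continuous.log
    · exact (continuous_const.sub (continuous_const.mul Real.continuous_cos)).add continuous_const
    · exact fun u => (quad_pos hr0.le hr1 u).ne'
  rw [integral_add (integrable_const _) hIntq, integral_log_quad hr0.le hr1,
    setIntegral_const, measureReal_def, Real.volume_Ioc, sub_zero, ENNReal.toReal_ofReal Real.pi_pos.le]
  simp [smul_eq_mul]

theorem integral_log_div_sqrt (a b : ℝ) (ha : 0 < a) (hab : a < b) :
    ∫ x in a..b, Real.log x / Real.sqrt ((b - x) * (x - a))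
      = 2 * Real.pi * Real.log ((Real.sqrt a + Real.sqrt b) / 2) := by
  set p := (a+b)/2 with hpdef
  set q := (b-a)/2 with hqdef
  have hq : 0 < q := by rw [hqdef]; linarith
  have hb2 : b = p + q := by rw [hpdef, hqdef]; ring
  have ha2 : a = p - q := by rw [hpdef, hqdef]; ring
  have hqp : q < p := by rw [hpdef, hqdef]; linarith
  clear_value p q
  set S := Set.Ioo (-(π/2)) (π/2) with hSdef
  set g : ℝ → ℝ := fun x => Real.log x / Real.sqrt ((b - x) * (x - a)) with hgdef
  have hSsub : S ⊆ Set.Icc (-(π/2)) (π/2) := Set.Ioo_subset_Icc_self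
  -- image
  have himage : (fun t => p + q * Real.sin t) '' S = Set.Ioo a b := by
    ext x
    constructor
    · rintro ⟨t, ht, rfl⟩
      have h1 : Real.sin t < 1 := by
        have hm : (π/2) ∈ Set.Icc (-(π/2)) (π/2) :=
          Set.mem_Icc.mpr ⟨by linarith [Real.pi_pos], le_refl _⟩
        have := Real.strictMonoOn_sin (hSsub ht) hm ht.2
        rwa [Real.sin_pi_div_two] at this
      have h2 : -1 < Real.sin t := by
        have hm : -(π/2) ∈ Set.Icc (-(π/2)) (π/2) :=
          Set.mem_Icc.mpr ⟨le_refl _, by linarith [Real.pi_pos]⟩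
        have := Real.strictMonoOn_sin hm (hSsub ht) ht.1
        rwa [Real.sin_neg, Real.sin_pi_div_two] at this
      dsimp only
      constructor
      · rw [ha2]; nlinarith
      · rw [hb2]; nlinarith
    · intro hx
      refine ⟨Real.arcsin ((x - p)/q), ⟨?_, ?_⟩, ?_⟩
      · rw [Real.neg_pi_div_two_lt_arcsin, neg_lt, ← neg_div, div_lt_one hq]
        rw [ha2] at hx; linarith [hx.1]
      · rw [Real.arcsin_lt_pi_div_two, div_lt_one hq]
        rw [hb2] at hx; linarith [hx.2]
      · dsimp only
        rw [Real.sin_arcsin]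
        · field_simp; ring
        · rw [neg_le, ← neg_div, div_le_iff₀ hq]; rw [ha2] at hx; linarith [hx.1]
        · rw [div_le_one hq]; rw [hb2] at hx; linarith [hx.2]
  have hinj : Set.InjOn (fun t => p + q * Real.sin t) S := by
    intro t1 h1 t2 h2 h
    have : Real.sin t1 = Real.sin t2 := by
      simp only at h
      exact mul_left_cancel₀ hq.ne' (add_left_cancel h)
    exact Real.injOn_sin (hSsub h1) (hSsub h2) this
  have hderiv : ∀ t ∈ S, HasDerivWithinAt (fun t => p + q * Real.sin t) (q * Real.cos t) S t := by
    intro t _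
    exact (((Real.hasDerivAt_sin t).const_mul q).const_add p).hasDerivWithinAt
  have cov := MeasureTheory.integral_image_eq_integral_abs_deriv_smul measurableSet_Ioo
    hderiv hinj g
  rw [himage] at cov
  have hpoint : ∀ t ∈ S, |q * Real.cos t| • g (p + q * Real.sin t)
      = Real.log (p + q * Real.sin t) := by
    intro t ht
    have hcos : 0 < Real.cos t := Real.cos_pos_of_mem_Ioo ht
    have hsq : (b - (p + q * Real.sin t)) * ((p + q * Real.sin t) - a)
        = (q * Real.cos t)^2 := by
      rw [hb2, ha2]
      linear_combination -q^2 * (Real.sin_sq_add_cos_sq t)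
    rw [hgdef]
    simp only [smul_eq_mul]
    rw [hsq, Real.sqrt_sq (by positivity), abs_of_pos (by positivity)]
    rw [mul_div_cancel₀ _ (by positivity)]
  rw [MeasureTheory.setIntegral_congr_fun measurableSet_Ioo hpoint] at cov
  -- now : ∫ x in Ioo a b, g x = ∫ t in S, log (p + q sin t)
  have lhs_eq : ∫ x in a..b, g x = ∫ x in Set.Ioo a b, g x := by
    rw [intervalIntegral.integral_of_le hab.le, MeasureTheory.integral_Ioc_eq_integral_Ioo]
  -- step E : ∫ t in S, log(p+q sin t) = ∫ u in Ioc 0 π, log (p - q cos u)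
  have hmpi : -(π/2) ≤ π/2 := by linarith [Real.pi_pos]
  have stepE : ∫ t in S, Real.log (p + q * Real.sin t)
      = ∫ u in Set.Ioc (0:ℝ) π, Real.log (p - q * Real.cos u) := by
    rw [hSdef, ← MeasureTheory.integral_Ioc_eq_integral_Ioo,
      ← intervalIntegral.integral_of_le hmpi]
    have hcomp := intervalIntegral.integral_comp_sub_right
      (fun t => Real.log (p + q * Real.sin t)) (π/2) (a := 0) (b := π)
    have h0 : (0:ℝ) - π/2 = -(π/2) := by ring
    have hπ : π - π/2 = π/2 := by ring
    rw [h0, hπ] at hcomp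
    rw [← hcomp, ← intervalIntegral.integral_of_le Real.pi_pos.le]
    congr 1
    funext u
    rw [Real.sin_sub_pi_div_two]
    ring_nf
  have hval := integral_log_p_sub_q_cos hq hqp
  have hab' : p^2 - q^2 = a * b := by rw [ha2, hb2]; ring
  rw [hab'] at hval
  -- final arithmetic
  have hsqrt : Real.sqrt (a*b) = Real.sqrt a * Real.sqrt b := Real.sqrt_mul ha.le b
  have hc : (p + Real.sqrt (a*b))/2 = ((Real.sqrt a + Real.sqrt b)/2)^2 := by
    rw [hsqrt, hpdef]
    have h1 : Real.sqrt a ^ 2 = a := Real.sq_sqrt ha.le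
    have h2 : Real.sqrt b ^ 2 = b := Real.sq_sqrt (ha.trans hab).le
    nlinarith [h1, h2]
  rw [hc] at hval
  have hpos : 0 < (Real.sqrt a + Real.sqrt b)/2 := by
    have := Real.sqrt_pos.mpr ha
    have := Real.sqrt_nonneg b
    linarith
  rw [show ((Real.sqrt a + Real.sqrt b)/2)^2 = ((Real.sqrt a + Real.sqrt b)/2)^(2:ℕ) from rfl,
    Real.log_pow] at hval
  show ∫ x in a..b, g x = _
  rw [lhs_eq, cov, stepE, hval]
  push_cast
  ring
end

section
/- For 0 < a < b, the integral ∫_a^b ln(x) dx / (x√((b-x)(x-a))) equals (2π/√(ab)) ln(2√(ab)/(√a+√b)). -/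
open Real MeasureTheory intervalIntegral Set

noncomputable def Laux (r : ℝ) : ℝ := ∫ θ in (0:ℝ)..π, Real.log (1 - 2*r*Real.cos θ + r^2)

lemma aux_pos {r : ℝ} (h : |r| < 1) (θ : ℝ) : 0 < 1 - 2*r*Real.cos θ + r^2 := by
  obtain ⟨h1, h2⟩ := abs_lt.mp h
  rcases le_or_gt 0 r with hr | hr
  · nlinarith [mul_nonneg hr (sub_nonneg.2 (Real.cos_le_one θ)), sq_nonneg (1 - r)]
  · nlinarith [mul_nonneg (neg_nonneg.2 hr.le) (by nlinarith [Real.neg_one_le_cos θ] : (0:ℝ) ≤ 1 + Real.cos θ), sq_nonneg (1 + r)]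

lemma aux_cont {r : ℝ} (h : |r| < 1) :
    Continuous (fun θ => Real.log (1 - 2*r*Real.cos θ + r^2)) := by
  have hc : Continuous fun θ => 1 - 2*r*Real.cos θ + r^2 := by continuity
  exact hc.log (fun θ => (aux_pos h θ).ne')

lemma Laux_dup {r : ℝ} (h : |r| < 1) : Laux r = Laux (r^2) / 2 := by
  have h2 : |r^2| < 1 := by rw [abs_pow]; exact pow_lt_one₀ (abs_nonneg r) h two_ne_zero
  have key : ∀ θ : ℝ, Real.log (1 - 2*r*Real.cos θ + r^2) + Real.log (1 - 2*r*Real.cos (π - θ) + r^2)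
      = Real.log (1 - 2*r^2*Real.cos (2*θ) + (r^2)^2) := by
    intro θ
    rw [← Real.log_mul (aux_pos h θ).ne' (aux_pos h (π - θ)).ne']
    congr 1
    rw [Real.cos_pi_sub, Real.cos_two_mul]
    ring
  have hint : ∀ u v : ℝ, IntervalIntegrable (fun θ => Real.log (1 - 2*r*Real.cos θ + r^2)) volume u v :=
    fun u v => (aux_cont h).intervalIntegrable u v
  have hsplit : Laux r = (∫ θ in (0:ℝ)..(π/2), Real.log (1 - 2*r*Real.cos θ + r^2))
      + ∫ θ in (π/2:ℝ)..π, Real.log (1 - 2*r*Real.cos θ + r^2) := by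
    rw [Laux, ← intervalIntegral.integral_add_adjacent_intervals (hint 0 (π/2)) (hint (π/2) π)]
  have hrefl : (∫ θ in (π/2:ℝ)..π, Real.log (1 - 2*r*Real.cos θ + r^2))
      = ∫ θ in (0:ℝ)..(π/2), Real.log (1 - 2*r*Real.cos (π - θ) + r^2) := by
    rw [intervalIntegral.integral_comp_sub_left (fun θ => Real.log (1 - 2*r*Real.cos θ + r^2)) π]
    congr 1 <;> ring
  have hcomb : Laux r = ∫ θ in (0:ℝ)..(π/2), Real.log (1 - 2*r^2*Real.cos (2*θ) + (r^2)^2) := by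
    have hint2 : IntervalIntegrable (fun θ => Real.log (1 - 2*r*Real.cos (π - θ) + r^2)) volume 0 (π/2) :=
      ((aux_cont h).comp' (continuous_const.sub continuous_id)).intervalIntegrable 0 (π/2)
    rw [hsplit, hrefl, ← intervalIntegral.integral_add (hint 0 (π/2)) hint2]
    exact intervalIntegral.integral_congr fun θ _ => key θ
  rw [hcomb, intervalIntegral.integral_comp_mul_left
    (fun u => Real.log (1 - 2*r^2*Real.cos u + (r^2)^2)) two_ne_zero,
    show (2:ℝ)*0 = 0 by ring, show (2:ℝ)*(π/2) = π by ring, Laux, smul_eq_mul]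
  ring
lemma Laux_bound {r t : ℝ} (hrt : |r| ≤ t) (ht : t < 1) :
    |Laux r| ≤ π * (Real.log 4 - 2 * Real.log (1 - t)) := by
  have h : |r| < 1 := lt_of_le_of_lt hrt ht
  have ht0 : 0 ≤ t := le_trans (abs_nonneg r) hrt
  have h1t : 0 < 1 - t := by linarith
  have hC : ∀ θ ∈ Set.uIoc (0:ℝ) π, ‖Real.log (1 - 2*r*Real.cos θ + r^2)‖ ≤
      Real.log 4 - 2 * Real.log (1 - t) := by
    intro θ _
    rw [Real.norm_eq_abs, abs_le]
    have hub : 1 - 2*r*Real.cos θ + r^2 ≤ 4 := by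
      obtain ⟨h1, h2⟩ := abs_lt.mp h
      nlinarith [Real.neg_one_le_cos θ, Real.cos_le_one θ]
    have hlb : (1 - t)^2 ≤ 1 - 2*r*Real.cos θ + r^2 := by
      have hrc : r * Real.cos θ ≤ |r| := (le_abs_self _).trans (by
        rw [abs_mul]; exact mul_le_of_le_one_right (abs_nonneg r) (Real.abs_cos_le_one θ))
      nlinarith [hrc, sq_abs r, abs_nonneg r,
        mul_nonneg (sub_nonneg.2 hrt) (by linarith [lt_of_le_of_lt hrt ht] : (0:ℝ) ≤ 2 - t - |r|)]
    have hl2 : Real.log ((1-t)^2) ≤ Real.log (1 - 2*r*Real.cos θ + r^2) :=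
      Real.log_le_log (by positivity) hlb
    have hl4 : Real.log (1 - 2*r*Real.cos θ + r^2) ≤ Real.log 4 :=
      Real.log_le_log (aux_pos h θ) hub
    have hlog2 : Real.log ((1-t)^2) = 2 * Real.log (1 - t) := by
      rw [Real.log_pow]; push_cast; ring
    have hlogt : Real.log (1 - t) ≤ 0 := Real.log_nonpos (by linarith) (by linarith)
    have hlog4 : (0:ℝ) ≤ Real.log 4 := Real.log_nonneg (by norm_num)
    constructor <;> [linarith; linarith]
  have := intervalIntegral.norm_integral_le_of_norm_le_const hC
  rw [Real.norm_eq_abs] at this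
  calc |Laux r| ≤ (Real.log 4 - 2 * Real.log (1 - t)) * |π - 0| := this
    _ = π * (Real.log 4 - 2 * Real.log (1 - t)) := by
        rw [sub_zero, abs_of_nonneg Real.pi_pos.le]; ring

lemma Laux_zero {r : ℝ} (h : |r| < 1) : Laux r = 0 := by
  have hiter : ∀ n : ℕ, Laux r = Laux (r ^ (2^n)) / 2^n := by
    intro n
    induction n with
    | zero => simp
    | succ n ih =>
      have habs : |r ^ (2^n)| < 1 := by
        rw [abs_pow]; exact pow_lt_one₀ (abs_nonneg r) h (by positivity)
      rw [ih, Laux_dup habs, show (r ^ (2^n))^2 = r ^ (2^(n+1)) by rw [← pow_mul]; ring_nf]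
      rw [pow_succ]
      ring
  set C := π * (Real.log 4 - 2 * Real.log (1 - |r|)) with hC
  have hbd : ∀ n : ℕ, |Laux r| ≤ C / 2^n := by
    intro n
    have habs : |r ^ (2^n)| ≤ |r| := by
      rw [abs_pow]
      exact pow_le_of_le_one (abs_nonneg r) h.le (by positivity)
    have hb := Laux_bound habs h
    rw [hiter n, abs_div, abs_of_nonneg (by positivity : (0:ℝ) ≤ (2:ℝ)^n), hC]
    gcongr
  have hlim : Filter.Tendsto (fun n : ℕ => C / 2^n) Filter.atTop (nhds 0) := by
    have := (tendsto_pow_atTop_nhds_zero_of_lt_one (by norm_num : (0:ℝ) ≤ 2⁻¹) (by norm_num)).const_mul C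
    simpa [div_eq_mul_inv, ← inv_pow] using this
  have hle : |Laux r| ≤ 0 := ge_of_tendsto' hlim hbd
  exact abs_eq_zero.mp (le_antisymm hle (abs_nonneg _))
lemma L2 {c ρ : ℝ} (hc : 0 < c) (hρ : 0 ≤ ρ) (hρc : ρ < c) :
    ∫ θ in (0:ℝ)..π, Real.log (c^2 - 2*c*ρ*Real.cos θ + ρ^2) = 2 * π * Real.log c := by
  have hr : |ρ/c| < 1 := by
    rw [abs_div, abs_of_nonneg hρ, abs_of_pos hc, div_lt_one hc]; exact hρc
  have hpt : ∀ θ : ℝ, Real.log (c^2 - 2*c*ρ*Real.cos θ + ρ^2)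
      = 2 * Real.log c + Real.log (1 - 2*(ρ/c)*Real.cos θ + (ρ/c)^2) := by
    intro θ
    have hfac : c^2 - 2*c*ρ*Real.cos θ + ρ^2 = c^2 * (1 - 2*(ρ/c)*Real.cos θ + (ρ/c)^2) := by
      field_simp
    rw [hfac, Real.log_mul (by positivity) (aux_pos hr θ).ne', Real.log_pow]
    push_cast; ring
  rw [intervalIntegral.integral_congr (fun θ _ => hpt θ),
    intervalIntegral.integral_add (intervalIntegrable_const) ((aux_cont hr).intervalIntegrable 0 π)]
  have : (∫ θ in (0:ℝ)..π, Real.log (1 - 2*(ρ/c)*Real.cos θ + (ρ/c)^2)) = Laux (ρ/c) := rfl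
  rw [this, Laux_zero hr]
  simp
  ring

lemma L3 {a b : ℝ} (ha : 0 < a) (hab : a < b) :
    ∫ θ in (-(π/2))..(π/2), Real.log ((a+b)/2 + (b-a)/2 * Real.sin θ)
      = 2 * π * Real.log ((Real.sqrt a + Real.sqrt b)/2) := by
  set c := (Real.sqrt a + Real.sqrt b)/2 with hcdef
  set ρ := (Real.sqrt b - Real.sqrt a)/2 with hρdef
  have hsa : 0 < Real.sqrt a := Real.sqrt_pos.2 ha
  have hsb : 0 < Real.sqrt b := Real.sqrt_pos.2 (lt_trans ha hab)
  have hsab : Real.sqrt a < Real.sqrt b := Real.sqrt_lt_sqrt ha.le hab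
  have hc : 0 < c := by rw [hcdef]; positivity
  have hρ : 0 ≤ ρ := by rw [hρdef]; linarith
  have hρc : ρ < c := by rw [hρdef, hcdef]; linarith
  have hsa2 : Real.sqrt a ^ 2 = a := Real.sq_sqrt ha.le
  have hsb2 : Real.sqrt b ^ 2 = b := Real.sq_sqrt (lt_trans ha hab).le
  have hpt : ∀ θ : ℝ, (a+b)/2 + (b-a)/2 * Real.sin θ
      = c^2 - 2*c*ρ*Real.cos (θ + π/2) + ρ^2 := by
    intro θ
    rw [Real.cos_add_pi_div_two, hcdef, hρdef]
    linear_combination (-(1 - Real.sin θ)/2) * hsa2 + (-(1 + Real.sin θ)/2) * hsb2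
  rw [intervalIntegral.integral_congr (fun θ _ => by rw [hpt θ])]
  rw [show (∫ θ in (-(π/2))..(π/2), Real.log (c^2 - 2*c*ρ*Real.cos (θ + π/2) + ρ^2))
      = ∫ θ in (-(π/2) + π/2)..(π/2 + π/2), Real.log (c^2 - 2*c*ρ*Real.cos θ + ρ^2) from
    intervalIntegral.integral_comp_add_right (fun θ => Real.log (c^2 - 2*c*ρ*Real.cos θ + ρ^2)) (π/2)]
  rw [show -(π/2) + π/2 = (0:ℝ) by ring, show π/2 + π/2 = π by ring]
  exact L2 hc hρ hρc
section Subst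

variable {a b : ℝ}

lemma sin_subst (g : ℝ → ℝ) (hab : a < b) :
    (∫ x in Set.Ioo a b, g x)
      = ∫ θ in Set.Ioo (-(π/2)) (π/2), |(b-a)/2 * Real.cos θ| • g ((a+b)/2 + (b-a)/2 * Real.sin θ) ∧
    (IntegrableOn g (Set.Ioo a b) ↔
      IntegrableOn (fun θ => |(b-a)/2 * Real.cos θ| • g ((a+b)/2 + (b-a)/2 * Real.sin θ))
        (Set.Ioo (-(π/2)) (π/2))) := by
  have hr : 0 < (b-a)/2 := by linarith
  set f : ℝ → ℝ := fun θ => (a+b)/2 + (b-a)/2 * Real.sin θ with hf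
  have hderiv : ∀ θ ∈ Set.Ioo (-(π/2)) (π/2),
      HasDerivWithinAt f ((b-a)/2 * Real.cos θ) (Set.Ioo (-(π/2)) (π/2)) θ := by
    intro θ _
    exact (((Real.hasDerivAt_sin θ).const_mul ((b-a)/2)).const_add ((a+b)/2)).hasDerivWithinAt
  have hinj : Set.InjOn f (Set.Ioo (-(π/2)) (π/2)) := by
    intro x hx y hy hxy
    simp only [hf] at hxy
    have hs : Real.sin x = Real.sin y := by nlinarith
    exact Real.injOn_sin (Set.Ioo_subset_Icc_self hx) (Set.Ioo_subset_Icc_self hy) hs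
  have himg : f '' Set.Ioo (-(π/2)) (π/2) = Set.Ioo a b := by
    ext x
    constructor
    · rintro ⟨θ, hθ, rfl⟩
      have h1 : Real.sin θ < 1 := by
        have := Real.strictMonoOn_sin (Set.Ioo_subset_Icc_self hθ)
          (Set.right_mem_Icc.2 (by linarith [Real.pi_pos])) hθ.2
        rwa [Real.sin_pi_div_two] at this
      have h2 : -1 < Real.sin θ := by
        have := Real.strictMonoOn_sin (Set.left_mem_Icc.2 (by linarith [Real.pi_pos]))
          (Set.Ioo_subset_Icc_self hθ) hθ.1
        rwa [Real.sin_neg, Real.sin_pi_div_two] at this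
      simp only [hf, Set.mem_Ioo]
      constructor <;> nlinarith
    · intro hx
      have h1 : -1 < (x - (a+b)/2) / ((b-a)/2) := by
        rw [lt_div_iff₀ hr]; nlinarith [hx.1]
      have h2 : (x - (a+b)/2) / ((b-a)/2) < 1 := by
        rw [div_lt_one hr]; nlinarith [hx.2]
      refine ⟨Real.arcsin ((x - (a+b)/2) / ((b-a)/2)),
        ⟨Real.neg_pi_div_two_lt_arcsin.2 h1, Real.arcsin_lt_pi_div_two.2 h2⟩, ?_⟩
      simp only [hf]
      rw [Real.sin_arcsin h1.le h2.le]
      have hba : b - a ≠ 0 := by linarith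
      field_simp
      ring
  constructor
  · rw [← himg,
      MeasureTheory.integral_image_eq_integral_abs_deriv_smul measurableSet_Ioo hderiv hinj g]
  · rw [← himg,
      MeasureTheory.integrableOn_image_iff_integrableOn_abs_deriv_smul measurableSet_Ioo hderiv hinj g]

lemma inv_subst (g : ℝ → ℝ) (ha : 0 < a) (hab : a < b) :
    (∫ x in Set.Ioo a b, g x) = ∫ x in Set.Ioo a b, |(-(a*b/x^2))| • g (a*b/x) := by
  have hb : 0 < b := lt_trans ha hab
  have hab0 : (0:ℝ) < a*b := mul_pos ha hb
  set f : ℝ → ℝ := fun x => a*b/x with hf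
  have hderiv : ∀ x ∈ Set.Ioo a b, HasDerivWithinAt f (-(a*b/x^2)) (Set.Ioo a b) x := by
    intro x hx
    have hx0 : x ≠ 0 := ne_of_gt (lt_trans ha hx.1)
    have h := (hasDerivAt_inv hx0).const_mul (a*b)
    have h2 : -(a*b/x^2) = a*b * (-(x^2)⁻¹) := by field_simp
    rw [h2]
    exact (h.congr_deriv rfl).hasDerivWithinAt.congr (fun y _ => by simp [hf, div_eq_mul_inv])
      (by simp [hf, div_eq_mul_inv])
  have hinj : Set.InjOn f (Set.Ioo a b) := by
    intro x hx y hy e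
    have hx0 : x ≠ 0 := ne_of_gt (lt_trans ha hx.1)
    have hy0 : y ≠ 0 := ne_of_gt (lt_trans ha hy.1)
    simp only [hf] at e
    field_simp at e
    exact e.symm
  have hmem : ∀ x, x ∈ Set.Ioo a b → a*b/x ∈ Set.Ioo a b := by
    intro x hx
    have hx0 : (0:ℝ) < x := lt_trans ha hx.1
    constructor
    · rw [lt_div_iff₀ hx0]; nlinarith [hx.2]
    · rw [div_lt_iff₀ hx0]; nlinarith [hx.1]
  have himg : f '' Set.Ioo a b = Set.Ioo a b := by
    ext y
    constructor
    · rintro ⟨x, hx, rfl⟩; exact hmem x hx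
    · intro hy
      have hy0 : y ≠ 0 := ne_of_gt (lt_trans ha hy.1)
      exact ⟨a*b/y, hmem y hy, by simp only [hf]; field_simp⟩
  conv_lhs => rw [← himg,
    MeasureTheory.integral_image_eq_integral_abs_deriv_smul measurableSet_Ioo hderiv hinj g]

end Subst
section Eval

variable {a b : ℝ}

lemma sqrt_cos (hab : a < b) {θ : ℝ} (hθ : θ ∈ Set.Ioo (-(π/2)) (π/2)) :
    Real.sqrt ((b - ((a+b)/2 + (b-a)/2 * Real.sin θ)) * (((a+b)/2 + (b-a)/2 * Real.sin θ) - a))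
      = (b-a)/2 * Real.cos θ := by
  have hr : 0 < (b-a)/2 := by linarith
  have hcos : 0 ≤ Real.cos θ := Real.cos_nonneg_of_mem_Icc (Set.Ioo_subset_Icc_self hθ)
  have key : (b - ((a+b)/2 + (b-a)/2 * Real.sin θ)) * (((a+b)/2 + (b-a)/2 * Real.sin θ) - a)
      = ((b-a)/2 * Real.cos θ)^2 := by
    linear_combination (-(((b-a)/2)^2)) * (Real.sin_sq_add_cos_sq θ)
  rw [key, Real.sqrt_sq (mul_nonneg hr.le hcos)]

lemma w_eval (ha : 0 < a) (hab : a < b) :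
    IntegrableOn (fun x => (Real.sqrt ((b-x)*(x-a)))⁻¹) (Set.Ioo a b) ∧
    ∫ x in Set.Ioo a b, (Real.sqrt ((b-x)*(x-a)))⁻¹ = π := by
  have hr : 0 < (b-a)/2 := by linarith
  obtain ⟨hint, hiff⟩ := sin_subst (fun x => (Real.sqrt ((b-x)*(x-a)))⁻¹) hab
  have heq : Set.EqOn
      (fun θ => |(b-a)/2 * Real.cos θ| •
        (Real.sqrt ((b - ((a+b)/2 + (b-a)/2 * Real.sin θ)) * (((a+b)/2 + (b-a)/2 * Real.sin θ) - a)))⁻¹)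
      (fun _ => (1:ℝ)) (Set.Ioo (-(π/2)) (π/2)) := by
    intro θ hθ
    have hcos : 0 < Real.cos θ := Real.cos_pos_of_mem_Ioo hθ
    have hc : 0 < (b-a)/2 * Real.cos θ := mul_pos hr hcos
    simp only [sqrt_cos hab hθ, smul_eq_mul, abs_of_pos hc]
    exact mul_inv_cancel₀ hc.ne'
  have hco : IntegrableOn (fun _ : ℝ => (1:ℝ)) (Set.Ioo (-(π/2)) (π/2)) :=
    integrableOn_const measure_Ioo_lt_top.ne
  have hI1 : ∫ θ in Set.Ioo (-(π/2)) (π/2), (1:ℝ) = π := by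
    rw [setIntegral_const, measureReal_def, Real.volume_Ioo, smul_eq_mul, mul_one,
      ENNReal.toReal_ofReal (by linarith [Real.pi_pos] : (0:ℝ) ≤ π/2 - -(π/2))]
    ring
  refine ⟨hiff.2 ((hco.congr_fun heq.symm measurableSet_Ioo)), ?_⟩
  rw [hint, setIntegral_congr_fun measurableSet_Ioo heq, hI1]

lemma logw_eval (ha : 0 < a) (hab : a < b) :
    IntegrableOn (fun x => Real.log x * (Real.sqrt ((b-x)*(x-a)))⁻¹) (Set.Ioo a b) ∧
    ∫ x in Set.Ioo a b, Real.log x * (Real.sqrt ((b-x)*(x-a)))⁻¹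
      = 2 * π * Real.log ((Real.sqrt a + Real.sqrt b)/2) := by
  have hr : 0 < (b-a)/2 := by linarith
  obtain ⟨hint, hiff⟩ := sin_subst (fun x => Real.log x * (Real.sqrt ((b-x)*(x-a)))⁻¹) hab
  have hfpos : ∀ θ : ℝ, 0 < (a+b)/2 + (b-a)/2 * Real.sin θ := by
    intro θ
    nlinarith [Real.neg_one_le_sin θ, Real.sin_le_one θ]
  have heq : Set.EqOn
      (fun θ => |(b-a)/2 * Real.cos θ| •
        (Real.log ((a+b)/2 + (b-a)/2 * Real.sin θ) *
          (Real.sqrt ((b - ((a+b)/2 + (b-a)/2 * Real.sin θ)) * (((a+b)/2 + (b-a)/2 * Real.sin θ) - a)))⁻¹))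
      (fun θ => Real.log ((a+b)/2 + (b-a)/2 * Real.sin θ)) (Set.Ioo (-(π/2)) (π/2)) := by
    intro θ hθ
    have hcos : 0 < Real.cos θ := Real.cos_pos_of_mem_Ioo hθ
    have hc : 0 < (b-a)/2 * Real.cos θ := mul_pos hr hcos
    simp only [sqrt_cos hab hθ, smul_eq_mul, abs_of_pos hc]
    rw [mul_comm (Real.log _) _, ← mul_assoc, mul_inv_cancel₀ hc.ne', one_mul]
  have hcont : Continuous (fun θ => Real.log ((a+b)/2 + (b-a)/2 * Real.sin θ)) := by
    apply Continuous.log (by continuity)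
    exact fun θ => (hfpos θ).ne'
  have hco : IntegrableOn (fun θ => Real.log ((a+b)/2 + (b-a)/2 * Real.sin θ))
      (Set.Ioo (-(π/2)) (π/2)) :=
    (hcont.integrableOn_Icc).mono_set Set.Ioo_subset_Icc_self
  have hI1 : ∫ θ in Set.Ioo (-(π/2)) (π/2), Real.log ((a+b)/2 + (b-a)/2 * Real.sin θ)
      = 2 * π * Real.log ((Real.sqrt a + Real.sqrt b)/2) := by
    rw [← integral_Ioc_eq_integral_Ioo,
      ← intervalIntegral.integral_of_le (by linarith [Real.pi_pos] : -(π/2) ≤ π/2)]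
    exact L3 ha hab
  refine ⟨hiff.2 ((hco.congr_fun heq.symm measurableSet_Ioo)), ?_⟩
  rw [hint, setIntegral_congr_fun measurableSet_Ioo heq, hI1]

end Eval
theorem integral_log_div_x_sqrt (a b : ℝ) (ha : 0 < a) (hab : a < b) :
    ∫ x in a..b, Real.log x / (x * Real.sqrt ((b - x) * (x - a)))
      = (2 * Real.pi / Real.sqrt (a * b))
          * Real.log (2 * Real.sqrt (a * b) / (Real.sqrt a + Real.sqrt b)) := by
  have hb : 0 < b := lt_trans ha hab
  have hab0 : 0 < a * b := mul_pos ha hb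
  set v := Real.sqrt (a*b) with hvdef
  have hv : 0 < v := Real.sqrt_pos.2 hab0
  have hv2 : v^2 = a*b := Real.sq_sqrt hab0.le
  -- step 1: interval integral to set integral over Ioo
  rw [intervalIntegral.integral_of_le hab.le, integral_Ioc_eq_integral_Ioo]
  -- step 2: substitution x ↦ ab/x
  rw [inv_subst (fun x => Real.log x / (x * Real.sqrt ((b - x) * (x - a)))) ha hab]
  -- step 3: pointwise simplification on Ioo
  have heq : Set.EqOn
      (fun x => |(-(a*b/x^2))| • (Real.log (a*b/x) / ((a*b/x) * Real.sqrt ((b - a*b/x) * (a*b/x - a)))))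
      (fun x => v⁻¹ * (Real.log (a*b) * (Real.sqrt ((b-x)*(x-a)))⁻¹
        - Real.log x * (Real.sqrt ((b-x)*(x-a)))⁻¹)) (Set.Ioo a b) := by
    intro x hx
    have hx0 : 0 < x := lt_trans ha hx.1
    have hu : 0 < Real.sqrt ((b-x)*(x-a)) :=
      Real.sqrt_pos.2 (mul_pos (by linarith [hx.2]) (by linarith [hx.1]))
    set u := Real.sqrt ((b-x)*(x-a)) with hudef
    have hu2 : u^2 = (b-x)*(x-a) :=
      Real.sq_sqrt (mul_nonneg (by linarith [hx.2]) (by linarith [hx.1]))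
    have hkey : Real.sqrt ((b - a*b/x) * (a*b/x - a)) = v * u / x := by
      have hexp : (b - a*b/x) * (a*b/x - a) = (v * u / x)^2 := by
        have e : (b - a*b/x) * (a*b/x - a) = (a*b) * ((b-x)*(x-a)) / x^2 := by
          field_simp
        rw [e, ← hv2, ← hu2]; ring
      rw [hexp, Real.sqrt_sq (by positivity)]
    have habs : |(-(a*b/x^2))| = a*b/x^2 := by
      rw [abs_neg, abs_of_pos (by positivity)]
    simp only [smul_eq_mul, habs, hkey, ← hudef, Real.log_div hab0.ne' hx0.ne']
    field_simp
  rw [setIntegral_congr_fun measurableSet_Ioo heq]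
  -- step 4: split the integral
  obtain ⟨hwi, hwv⟩ := w_eval ha hab
  obtain ⟨hlwi, hlwv⟩ := logw_eval ha hab
  rw [MeasureTheory.integral_const_mul]
  rw [MeasureTheory.integral_sub (hwi.const_mul (Real.log (a*b))) hlwi]
  rw [MeasureTheory.integral_const_mul, hwv, hlwv]
  -- step 5: final log algebra
  have hsa : 0 < Real.sqrt a := Real.sqrt_pos.2 ha
  have hsb : 0 < Real.sqrt b := Real.sqrt_pos.2 hb
  have hlogab : Real.log (a*b) = 2 * Real.log v := by
    rw [← hv2, Real.log_pow]; push_cast; ring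
  have hlog2 : Real.log ((Real.sqrt a + Real.sqrt b)/2)
      = Real.log (Real.sqrt a + Real.sqrt b) - Real.log 2 :=
    Real.log_div (by positivity) (by norm_num)
  have hlog3 : Real.log (2 * v / (Real.sqrt a + Real.sqrt b))
      = Real.log 2 + Real.log v - Real.log (Real.sqrt a + Real.sqrt b) := by
    rw [Real.log_div (by positivity) (by positivity), Real.log_mul (by norm_num) hv.ne']
  rw [hlogab, hlog2, hlog3]
  field_simp
  ring
end

section
/- If g satisfies the Painlevé III' equation g'' = (g')²/g − g'/s + 2g²/s² + α/(2s) − 1/(4g) on an interval where g ≠ 0 and s ≠ 0, and H is defined by H(s) = (s g'(s) − g(s))²/(4 g(s)²) + (4α s g(s) − s²)/(16 g(s)²) − g(s) − α²/4, then H satisfies (s H'')² + 4(H')²(s H' − H) − (α H' + 1/2)² = 0. -/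
/-- Key lemma: the Hamiltonian-like quantity H has derivative `-g s / s` on I. -/
lemma painleve_H_deriv (α : ℝ) (I : Set ℝ)
    (hIpos : I ⊆ Set.Ioi (0 : ℝ)) (g : ℝ → ℝ)
    (hg1 : ∀ s ∈ I, DifferentiableAt ℝ g s)
    (hg2 : ∀ s ∈ I, DifferentiableAt ℝ (deriv g) s)
    (hgne : ∀ s ∈ I, g s ≠ 0)
    (hode : ∀ s ∈ I,
      deriv (deriv g) s
        = (deriv g s) ^ 2 / g s - deriv g s / s + 2 * (g s) ^ 2 / s ^ 2
            + α / (2 * s) - 1 / (4 * g s)) :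
    ∀ s ∈ I, HasDerivAt (fun s : ℝ =>
        (s * deriv g s - g s) ^ 2 / (4 * (g s) ^ 2)
          + (4 * α * s * g s - s ^ 2) / (16 * (g s) ^ 2) - g s - α ^ 2 / 4)
      (-(g s) / s) s := by
  intro s hs
  have hs0 : s ≠ 0 := ne_of_gt (hIpos hs)
  have hg0 : g s ≠ 0 := hgne s hs
  have hgd : HasDerivAt g (deriv g s) s := (hg1 s hs).hasDerivAt
  have hgd2 : HasDerivAt (deriv g) (deriv (deriv g) s) s := (hg2 s hs).hasDerivAt
  set p := deriv g s with hp
  set q := deriv (deriv g) s with hq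
  -- numerator 1 : t * g' t - g t
  have h1 : HasDerivAt (fun t : ℝ => t * deriv g t - g t)
      (1 * p + s * q - p) s := ((hasDerivAt_id s).mul hgd2).sub hgd
  have h1sq : HasDerivAt (fun t : ℝ => (t * deriv g t - g t) ^ 2)
      (2 * (s * p - g s) * (1 * p + s * q - p)) s := by
    have := h1.fun_pow 2
    simpa [mul_comm, mul_assoc, mul_left_comm] using this
  have hden1 : HasDerivAt (fun t : ℝ => 4 * (g t) ^ 2) (4 * (2 * g s * p)) s := by
    have := (hgd.pow 2).const_mul (4 : ℝ)
    simpa [mul_comm, mul_assoc, mul_left_comm] using this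
  have hden1ne : 4 * (g s) ^ 2 ≠ 0 := by positivity
  have hA : HasDerivAt (fun t : ℝ => (t * deriv g t - g t) ^ 2 / (4 * (g t) ^ 2))
      ((2 * (s * p - g s) * (1 * p + s * q - p) * (4 * (g s) ^ 2)
        - (s * p - g s) ^ 2 * (4 * (2 * g s * p))) / (4 * (g s) ^ 2) ^ 2) s :=
    h1sq.div hden1 hden1ne
  -- second fraction
  have h2 : HasDerivAt (fun t : ℝ => 4 * α * t * g t - t ^ 2)
      ((4 * α * 1 * g s + 4 * α * s * p) - 2 * s) s := by
    have hmul : HasDerivAt (fun t : ℝ => 4 * α * t * g t)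
        (4 * α * 1 * g s + 4 * α * s * p) s := by
      have := (((hasDerivAt_id s).const_mul (4 * α)).fun_mul hgd)
      simpa [mul_comm, mul_assoc, mul_left_comm] using this
    have hsq : HasDerivAt (fun t : ℝ => t ^ 2) (2 * s) s := by
      simpa using (hasDerivAt_id s).fun_pow 2
    exact hmul.sub hsq
  have hden2 : HasDerivAt (fun t : ℝ => 16 * (g t) ^ 2) (16 * (2 * g s * p)) s := by
    have := (hgd.pow 2).const_mul (16 : ℝ)
    simpa [mul_comm, mul_assoc, mul_left_comm] using this
  have hden2ne : 16 * (g s) ^ 2 ≠ 0 := by positivity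
  have hB : HasDerivAt (fun t : ℝ => (4 * α * t * g t - t ^ 2) / (16 * (g t) ^ 2))
      ((((4 * α * 1 * g s + 4 * α * s * p) - 2 * s) * (16 * (g s) ^ 2)
        - (4 * α * s * g s - s ^ 2) * (16 * (2 * g s * p))) / (16 * (g s) ^ 2) ^ 2) s :=
    h2.div hden2 hden2ne
  have hH : HasDerivAt (fun t : ℝ =>
      (t * deriv g t - g t) ^ 2 / (4 * (g t) ^ 2)
        + (4 * α * t * g t - t ^ 2) / (16 * (g t) ^ 2) - g t - α ^ 2 / 4)
      ((2 * (s * p - g s) * (1 * p + s * q - p) * (4 * (g s) ^ 2)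
        - (s * p - g s) ^ 2 * (4 * (2 * g s * p))) / (4 * (g s) ^ 2) ^ 2
       + (((4 * α * 1 * g s + 4 * α * s * p) - 2 * s) * (16 * (g s) ^ 2)
        - (4 * α * s * g s - s ^ 2) * (16 * (2 * g s * p))) / (16 * (g s) ^ 2) ^ 2
       - p - 0) s := ((hA.add hB).sub hgd).sub (hasDerivAt_const s _)
  convert hH using 1
  rw [hode s hs] at hq
  rw [hq]
  field_simp
  ring

theorem sigma_form_from_painleveIII' (α : ℝ) (I : Set ℝ) (hI : IsOpen I)
    (hIpos : I ⊆ Set.Ioi (0 : ℝ)) (g : ℝ → ℝ)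
    (hg1 : ∀ s ∈ I, DifferentiableAt ℝ g s)
    (hg2 : ∀ s ∈ I, DifferentiableAt ℝ (deriv g) s)
    (hgne : ∀ s ∈ I, g s ≠ 0)
    (hode : ∀ s ∈ I,
      deriv (deriv g) s
        = (deriv g s) ^ 2 / g s - deriv g s / s + 2 * (g s) ^ 2 / s ^ 2
            + α / (2 * s) - 1 / (4 * g s)) :
    ∀ s ∈ I,
      (s * deriv (deriv (fun s : ℝ =>
          (s * deriv g s - g s) ^ 2 / (4 * (g s) ^ 2)
            + (4 * α * s * g s - s ^ 2) / (16 * (g s) ^ 2) - g s - α ^ 2 / 4)) s) ^ 2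
        + 4 * (deriv (fun s : ℝ =>
            (s * deriv g s - g s) ^ 2 / (4 * (g s) ^ 2)
              + (4 * α * s * g s - s ^ 2) / (16 * (g s) ^ 2) - g s - α ^ 2 / 4) s) ^ 2
          * (s * deriv (fun s : ℝ =>
              (s * deriv g s - g s) ^ 2 / (4 * (g s) ^ 2)
                + (4 * α * s * g s - s ^ 2) / (16 * (g s) ^ 2) - g s - α ^ 2 / 4) s
            - ((s * deriv g s - g s) ^ 2 / (4 * (g s) ^ 2)
                + (4 * α * s * g s - s ^ 2) / (16 * (g s) ^ 2) - g s - α ^ 2 / 4))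
        - (α * deriv (fun s : ℝ =>
            (s * deriv g s - g s) ^ 2 / (4 * (g s) ^ 2)
              + (4 * α * s * g s - s ^ 2) / (16 * (g s) ^ 2) - g s - α ^ 2 / 4) s
            + 1 / 2) ^ 2 = 0 := by
  intro s hs
  have hs0 : s ≠ 0 := ne_of_gt (hIpos hs)
  have hg0 : g s ≠ 0 := hgne s hs
  set H : ℝ → ℝ := fun s : ℝ =>
      (s * deriv g s - g s) ^ 2 / (4 * (g s) ^ 2)
        + (4 * α * s * g s - s ^ 2) / (16 * (g s) ^ 2) - g s - α ^ 2 / 4 with hH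
  have hder : ∀ t ∈ I, deriv H t = -(g t) / t := fun t ht =>
    (painleve_H_deriv α I hIpos g hg1 hg2 hgne hode t ht).deriv
  -- first derivative at s
  have hd1 : deriv H s = -(g s) / s := hder s hs
  -- second derivative: deriv H agrees with t ↦ -g t / t near s
  have heq : deriv H =ᶠ[nhds s] (fun t : ℝ => -(g t) / t) := by
    filter_upwards [hI.mem_nhds hs] with t ht using hder t ht
  have hgd : HasDerivAt g (deriv g s) s := (hg1 s hs).hasDerivAt
  have hneg : HasDerivAt (fun t : ℝ => -(g t) / t)
      ((-(deriv g s) * s - -(g s) * 1) / s ^ 2) s := hgd.neg.div (hasDerivAt_id s) hs0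
  have hd2 : deriv (deriv H) s = (-(deriv g s) * s - -(g s) * 1) / s ^ 2 := by
    rw [heq.deriv_eq]
    exact hneg.deriv
  rw [hd1, hd2]
  set p := deriv g s
  field_simp
  ring
end
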